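/- Let T=(V,E) be a tree with n vertices, and let T̄=(V̄,Ē) be a subtree of T with q = |V̄| vertices. For every valid initial configuration A with at least q holes (q ≤ |H|), there exists a plan f with |f| ≤ n·q such that V̄ ∩ ρ(A,f)(P) = ∅, i.e., after applying f every vertex of the subtree T̄ is unoccupied by pebbles (the gather holes problem is solvable with O(nq) moves). -/
import Mathlib


namespace PMT

variable {V P H : Type}

/-- A configuration assigns to each pebble or hole a vertex, bijectively. -/
abbrev Config (P H V : Type) : Type := (P ⊕ H) ≃ V

/- Apply a single move `u → v`: applicable iff `(u,v)` is an edge and the occupant of `v`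
is a hole; applying it swaps the occupants of `u` and `v`. -/
open Classical in
noncomputable def applyMove (G : SimpleGraph V) (A : Config P H V) (m : V × V) :
    Option (Config P H V) :=
  if G.Adj m.1 m.2 ∧ (A.symm m.2).isRight = true then
    some (A.trans (Equiv.swap m.1 m.2))
  else
    none

/-- Apply a plan (finite list of moves) in order; defined (`some`) only when each
successive move is applicable. -/
noncomputable def applyPlan (G : SimpleGraph V) :
    Config P H V → List (V × V) → Option (Config P H V)
  | A, [] => some A
  | A, m :: f => (applyMove G A m).bind fun B => applyPlan G B f

lemma applyPlan_append (G : SimpleGraph V) (A : Config P H V) (f g : List (V × V)) :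
    applyPlan G A (f ++ g) = (applyPlan G A f).bind (fun B => applyPlan G B g) := by
  induction f generalizing A with
  | nil => simp [applyPlan]
  | cons m f ih =>
    simp only [List.cons_append, applyPlan]
    cases applyMove G A m with
    | none => simp
    | some B => simp [ih]

noncomputable def shiftPlan {G : SimpleGraph V} : ∀ {v h : V}, G.Walk v h → List (V × V)
  | _, _, SimpleGraph.Walk.nil => []
  | _, _, SimpleGraph.Walk.cons (u := u) (v := x) _ q => shiftPlan q ++ [(u, x)]

lemma shift {G : SimpleGraph V} (A : Config P H V) {v h : V} (p : G.Walk v h)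
    (hp : p.IsPath) (hh : (A.symm h).isRight = true)
    (hpeb : ∀ x ∈ p.support, x ≠ h → (A.symm x).isRight = false) :
    ∃ B : Config P H V, applyPlan G A (shiftPlan p) = some B ∧
      (shiftPlan p).length = p.length ∧
      ∀ y, ((B.symm y).isRight = true ↔ ((A.symm y).isRight = true ∧ y ≠ h) ∨ y = v) := by
  classical
  induction p with
  | nil =>
    refine ⟨A, rfl, rfl, fun y => ?_⟩
    constructor
    · intro hy
      exact or_iff_not_imp_right.mpr (fun hne => ⟨hy, hne⟩)
    · rintro (⟨hy, _⟩ | rfl)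
      · exact hy
      · exact hh
  | @cons u x h adj q ih =>
    have hq : q.IsPath := hp.of_cons
    have hu : u ∉ q.support := (SimpleGraph.Walk.cons_isPath_iff _ _).mp hp |>.2
    have hpeb' : ∀ y ∈ q.support, y ≠ h → (A.symm y).isRight = false := fun y hy hyh =>
      hpeb y (by simp [hy]) hyh
    obtain ⟨B, hB, hlen, hiff⟩ := ih hq hh hpeb'
    have hux : u ≠ x := G.ne_of_adj adj
    have huh : u ≠ h := fun e => hu (e ▸ q.end_mem_support)
    have hupeb : (A.symm u).isRight = false := hpeb u (by simp) huh
    have hxhole : (B.symm x).isRight = true := (hiff x).mpr (Or.inr rfl)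
    have happly : applyMove G B (u, x) = some (B.trans (Equiv.swap u x)) := by
      rw [applyMove, if_pos ⟨adj, hxhole⟩]
    refine ⟨B.trans (Equiv.swap u x), ?_, ?_, ?_⟩
    · rw [shiftPlan, applyPlan_append, hB]
      simp [applyPlan, happly]
    · simp [shiftPlan, hlen, SimpleGraph.Walk.length_cons]
    · intro y
      have hCB : ((B.trans (Equiv.swap u x)).symm y).isRight
          = (B.symm (Equiv.swap u x y)).isRight := rfl
      rw [hCB]
      have hBu : (B.symm u).isRight = true ↔ False := by
        rw [hiff u]
        simp [huh, hux, hupeb]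
      by_cases hyu : y = u
      · subst hyu
        rw [Equiv.swap_apply_left, hxhole]
        simp
      · by_cases hyx : y = x
        · subst hyx
          rw [Equiv.swap_apply_right]
          constructor
          · intro hBy; exact absurd hBy (by simpa using hBu.mp)
          · rintro (⟨hy, hyh⟩ | rfl)
            · exact absurd (hpeb y (by simp) hyh) (by simp [hy])
            · exact absurd rfl hux
        · rw [Equiv.swap_apply_of_ne_of_ne hyu hyx, hiff y]
          constructor
          · rintro (hy | rfl)
            · exact Or.inl hy
            · exact absurd rfl hyx
          · rintro (hy | rfl)
            · exact Or.inl hy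
            · exact absurd rfl hyu

lemma firstHole {G : SimpleGraph V} (A : Config P H V) {v h : V} (p : G.Walk v h)
    (hh : (A.symm h).isRight = true) :
    ∃ (w : V) (q : G.Walk v w) (r : G.Walk w h), q.append r = p ∧
      (A.symm w).isRight = true ∧
      ∀ x ∈ q.support, x ≠ w → (A.symm x).isRight = false := by
  induction p with
  | nil =>
    exact ⟨_, SimpleGraph.Walk.nil, SimpleGraph.Walk.nil, rfl, hh, by
      intro x hx hxw
      simp only [SimpleGraph.Walk.support_nil, List.mem_singleton] at hx
      exact absurd hx hxw⟩
  | @cons u x h adj q ih =>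
    by_cases hv : (A.symm u).isRight = true
    · exact ⟨u, SimpleGraph.Walk.nil, SimpleGraph.Walk.cons adj q, rfl, hv, by
        intro y hy hyw
        simp only [SimpleGraph.Walk.support_nil, List.mem_singleton] at hy
        exact absurd hy hyw⟩
    · obtain ⟨w, q1, r, happ, hw, hpeb⟩ := ih hh
      refine ⟨w, SimpleGraph.Walk.cons adj q1, r, by rw [SimpleGraph.Walk.cons_append, happ],
        hw, ?_⟩
      intro y hy hyw
      rcases (by simpa using hy : y = u ∨ y ∈ q1.support) with rfl | hy'
      · simpa using hv
      · exact hpeb y hy' hyw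


lemma gainAux (G : SimpleGraph V) (S : Finset V) :
    ∀ (n : ℕ) (A : Config P H V) (v h : V) (p : G.Walk v h), p.length ≤ n → p.IsPath →
      v ∈ S → (A.symm v).isRight = false → (A.symm h).isRight = true → h ∉ S →
      ∃ (f : List (V × V)) (B : Config P H V), applyPlan G A f = some B ∧
        f.length ≤ p.length ∧
        (S.filter (fun y => (B.symm y).isRight = true)).card
          = (S.filter (fun y => (A.symm y).isRight = true)).card + 1 := by
  classical
  intro n
  induction n with
  | zero =>
    intro A v h p hlen hp hvS hv hh hhS
    have hvh : v = h := SimpleGraph.Walk.eq_of_length_eq_zero (Nat.le_zero.mp hlen)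
    rw [hvh, hh] at hv
    exact absurd hv (by simp)
  | succ n ih =>
    intro A v h p hlen hp hvS hv hh hhS
    obtain ⟨w, q, r, happ, hw, hpeb⟩ := firstHole A p hh
    have hqpath : q.IsPath := by
      rw [← happ] at hp
      exact hp.of_append_left
    have hrpath : r.IsPath := by
      rw [← happ] at hp
      exact hp.of_append_right
    have hvw : v ≠ w := by
      intro e
      rw [e, hw] at hv
      exact absurd hv (by simp)
    have hplen : p.length = q.length + r.length := by
      rw [← happ, SimpleGraph.Walk.length_append]
    have hq1 : 1 ≤ q.length := by
      rcases Nat.eq_zero_or_pos q.length with h0 | h0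
      · exact absurd (SimpleGraph.Walk.eq_of_length_eq_zero h0) hvw
      · exact h0
    obtain ⟨B, hB, hBlen, hiff⟩ := shift A q hqpath hw hpeb
    have hvA : v ∉ S.filter (fun y => (A.symm y).isRight = true) := by
      simp [Finset.mem_filter, hv]
    by_cases hwS : w ∈ S
    · -- first hole inside S: shift to it, no net change, recurse on r
      have hBw : (B.symm w).isRight = false := by
        have := (hiff w)
        simp only [ne_eq, not_true_eq_false, and_false, false_or] at this
        rcases Bool.eq_false_or_eq_true ((B.symm w).isRight) with h' | h'
        · exact absurd (this.mp h') (Ne.symm hvw)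
        · exact h'
      have hhw : h ≠ w := fun e => hhS (e ▸ hwS)
      have hBh : (B.symm h).isRight = true := (hiff h).mpr (Or.inl ⟨hh, hhw⟩)
      have hrlen : r.length ≤ n := by omega
      obtain ⟨f', B', hB', hflen', hcard'⟩ := ih B w h r hrlen hrpath hwS hBw hBh hhS
      refine ⟨shiftPlan q ++ f', B', ?_, ?_, ?_⟩
      · rw [applyPlan_append, hB]
        simpa using hB'
      · rw [List.length_append, hBlen]
        omega
      · -- card for B equals card for A
        have hBA : S.filter (fun y => (B.symm y).isRight = true)
            = insert v ((S.filter (fun y => (A.symm y).isRight = true)).erase w) := by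
          ext y
          simp only [Finset.mem_filter, Finset.mem_insert, Finset.mem_erase, hiff y]
          constructor
          · rintro ⟨hyS, ⟨hy, hyw⟩ | rfl⟩
            · exact Or.inr ⟨hyw, hyS, hy⟩
            · exact Or.inl rfl
          · rintro (rfl | ⟨hyw, hyS, hy⟩)
            · exact ⟨hvS, Or.inr rfl⟩
            · exact ⟨hyS, Or.inl ⟨hy, hyw⟩⟩
        have hwA : w ∈ S.filter (fun y => (A.symm y).isRight = true) := by
          simp [Finset.mem_filter, hwS, hw]
        have hvErase : v ∉ (S.filter (fun y => (A.symm y).isRight = true)).erase w :=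
          fun hc => hvA (Finset.mem_of_mem_erase hc)
        rw [hcard', hBA, Finset.card_insert_of_notMem hvErase,
          Finset.card_erase_of_mem hwA]
        have : 1 ≤ (S.filter (fun y => (A.symm y).isRight = true)).card :=
          Finset.card_pos.mpr ⟨w, hwA⟩
        omega
    · -- first hole outside S: shift to v gains a hole in S
      refine ⟨shiftPlan q, B, hB, by omega, ?_⟩
      have hBA : S.filter (fun y => (B.symm y).isRight = true)
          = insert v (S.filter (fun y => (A.symm y).isRight = true)) := by
        ext y
        simp only [Finset.mem_filter, Finset.mem_insert, hiff y]
        constructor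
        · rintro ⟨hyS, ⟨hy, _⟩ | rfl⟩
          · exact Or.inr ⟨hyS, hy⟩
          · exact Or.inl rfl
        · rintro (rfl | ⟨hyS, hy⟩)
          · exact ⟨hvS, Or.inr rfl⟩
          · exact ⟨hyS, Or.inl ⟨hy, fun e => hwS (e ▸ hyS)⟩⟩
      rw [hBA, Finset.card_insert_of_notMem hvA]

lemma outer [Fintype V] [Fintype P] [Fintype H] (G : SimpleGraph V) (hT : G.IsTree)
    (S : Finset V) (hq : S.card ≤ Fintype.card H) :
    ∀ (k : ℕ) (A : Config P H V),
      S.card ≤ (S.filter (fun y => (A.symm y).isRight = true)).card + k →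
      ∃ (f : List (V × V)) (B : Config P H V), applyPlan G A f = some B ∧
        f.length ≤ Fintype.card V * k ∧ ∀ y ∈ S, (B.symm y).isRight = true := by
  classical
  intro k
  induction k with
  | zero =>
    intro A hk
    refine ⟨[], A, rfl, by simp, fun y hy => ?_⟩
    have hfil : S.filter (fun y => (A.symm y).isRight = true) = S :=
      Finset.eq_of_subset_of_card_le (Finset.filter_subset _ _) (by simpa using hk)
    have := hfil ▸ hy
    exact (Finset.mem_filter.mp this).2
  | succ k ih =>
    intro A hk
    by_cases hall : S.card ≤ (S.filter (fun y => (A.symm y).isRight = true)).card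
    · obtain ⟨f, B, h1, h2, h3⟩ := ih A (by omega)
      exact ⟨f, B, h1, h2.trans (Nat.mul_le_mul_left _ (Nat.le_succ k)), h3⟩
    · push_neg at hall
      -- a pebbled vertex in S
      have hex : ∃ v ∈ S, v ∉ S.filter (fun y => (A.symm y).isRight = true) := by
        by_contra hc
        push_neg at hc
        exact absurd (Finset.card_le_card hc) (by omega)
      obtain ⟨v, hvS, hvf⟩ := hex
      have hv : (A.symm v).isRight = false := by
        rcases Bool.eq_false_or_eq_true ((A.symm v).isRight) with h' | h'
        · exact absurd (Finset.mem_filter.mpr ⟨hvS, h'⟩) hvf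
        · exact h'
      -- a hole outside S
      have hexh : ∃ h0, (A.symm h0).isRight = true ∧ h0 ∉ S := by
        by_contra hc
        push_neg at hc
        have hinj : Set.InjOn (fun z : H => A (Sum.inr z)) ↑(Finset.univ : Finset H) :=
          fun a _ b _ hab => Sum.inr_injective (A.injective hab)
        have hmaps : ∀ z ∈ (Finset.univ : Finset H),
            A (Sum.inr z) ∈ S.filter (fun y => (A.symm y).isRight = true) := by
          intro z _
          have hhole : ((A.symm) (A (Sum.inr z))).isRight = true := by
            rw [Equiv.symm_apply_apply]; rfl
          exact Finset.mem_filter.mpr ⟨hc _ hhole, hhole⟩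
        have := Finset.card_le_card_of_injOn _ hmaps hinj
        simp only [Finset.card_univ] at this
        omega
      obtain ⟨h0, hh0, hh0S⟩ := hexh
      obtain ⟨p0⟩ := hT.isConnected.preconnected v h0
      obtain ⟨p, hp⟩ := p0.toPath
      have hplen : p.length < Fintype.card V := hp.length_lt
      obtain ⟨f1, B1, h1, hl1, hc1⟩ :=
        gainAux G S p.length A v h0 p le_rfl hp hvS hv hh0 hh0S
      obtain ⟨f2, B2, h2, hl2, h3⟩ := ih B1 (by omega)
      refine ⟨f1 ++ f2, B2, ?_, ?_, h3⟩
      · rw [applyPlan_append, h1]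
        simpa using h2
      · rw [List.length_append]
        have : Fintype.card V * (k + 1) = Fintype.card V * k + Fintype.card V :=
          Nat.mul_succ _ _
        omega


end PMT

/-- the gather-holes problem: for every subtree `S` with `q = |S| ≤ |H|`
vertices there is a plan of at most `n·q` moves after which every vertex of `S` is
unoccupied by pebbles. -/
theorem gather_holes {V P H : Type} [Fintype V] [Fintype P] [Fintype H]
    (G : SimpleGraph V) (hT : G.IsTree)
    (hcard : Fintype.card V = Fintype.card P + Fintype.card H)
    (A : PMT.Config P H V) (S : Finset V)
    (hconn : (G.induce (S : Set V)).Connected)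
    (hq : S.card ≤ Fintype.card H) :
    ∃ (f : List (V × V)) (B : PMT.Config P H V),
      PMT.applyPlan G A f = some B ∧
      f.length ≤ Fintype.card V * S.card ∧
      ∀ v ∈ S, (B.symm v).isRight = true := by
  obtain ⟨f, B, h1, h2, h3⟩ := PMT.outer G hT S hq S.card A (Nat.le_add_left S.card _)
  exact ⟨f, B, h1, h2, h3⟩
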